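/- arXiv:2501.15822 — 3 statements merged into one kernel-verified Lean document; each statement's English description precedes it below -/
import Mathlib

section
/- Let X be a convex cone in ℝ^n, η a point in the relative interior of X, and γ a point of the relative boundary ∂X = cl(X) \ X°. Then for every t > 0, the open segment (tγ − η, γ) is disjoint from the closure of X. -/
open Set

variable {n : ℕ}

/-- A convex cone in `ℝ^n`: closed under nonnegative combinations. -/
def IsConvexCone (X : Set (Fin n → ℝ)) : Prop :=
  ∀ ⦃x⦄, x ∈ X → ∀ ⦃y⦄, y ∈ X → ∀ ⦃u v : ℝ⦄, 0 ≤ u → 0 ≤ v → u • x + v • y ∈ X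

/-- The relative interior of `X`: points of `X` admitting a neighborhood (inside the
linear span of `X`, with its subspace topology) contained in `X`. -/
def relInt (X : Set (Fin n → ℝ)) : Set (Fin n → ℝ) :=
  {x ∈ X | ∃ ε : ℝ, 0 < ε ∧ ∀ y ∈ Submodule.span ℝ X, dist y x < ε → y ∈ X}

lemma closure_subset_span (X : Set (Fin n → ℝ)) :
    closure X ⊆ (Submodule.span ℝ X : Set (Fin n → ℝ)) :=
  closure_minimal Submodule.subset_span (Submodule.closed_of_finiteDimensional _)

lemma relInt_add_closure {X : Set (Fin n → ℝ)} (hX : IsConvexCone X)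
    {η z : Fin n → ℝ} (hη : η ∈ relInt X) (hz : z ∈ closure X) :
    η + z ∈ relInt X := by
  obtain ⟨hηX, ε, hε, hball⟩ := hη
  have key : ∀ y ∈ Submodule.span ℝ X, dist y (η + z) < ε / 2 → y ∈ X := by
    intro y hy hd
    obtain ⟨x, hxX, hxz⟩ := Metric.mem_closure_iff.mp hz (ε / 2) (by linarith)
    have heq : y - x - η = (y - (η + z)) + (z - x) := by abel
    have h1 : dist (y - x) η < ε := by
      rw [dist_eq_norm, heq]
      calc ‖(y - (η + z)) + (z - x)‖ ≤ ‖y - (η + z)‖ + ‖z - x‖ := norm_add_le _ _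
        _ < ε := by
            rw [← dist_eq_norm, ← dist_eq_norm]
            linarith
    have hmem : y - x ∈ X :=
      hball _ (Submodule.sub_mem _ hy (Submodule.subset_span hxX)) h1
    have := hX hmem hxX (u := 1) (v := 1) zero_le_one zero_le_one
    simpa using this
  have hmemspan : η + z ∈ Submodule.span ℝ X :=
    Submodule.add_mem _ (Submodule.subset_span hηX) (closure_subset_span X hz)
  exact ⟨key _ hmemspan (by simp; linarith), ε / 2, by linarith, key⟩

lemma relInt_smul {X : Set (Fin n → ℝ)} (hX : IsConvexCone X)
    {η : Fin n → ℝ} (hη : η ∈ relInt X) {c : ℝ} (hc : 0 < c) :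
    c • η ∈ relInt X := by
  obtain ⟨hηX, ε, hε, hball⟩ := hη
  have hcη : c • η ∈ X := by
    have := hX hηX hηX (u := c) (v := 0) hc.le le_rfl
    simpa using this
  refine ⟨hcη, c * ε, mul_pos hc hε, fun y hy hd => ?_⟩
  have h1 : dist (c⁻¹ • y) η < ε := by
    have h2 : dist (c⁻¹ • y) (c⁻¹ • (c • η)) = |c⁻¹| * dist y (c • η) := dist_smul₀ _ _ _
    rw [inv_smul_smul₀ hc.ne'] at h2
    rw [h2, abs_of_pos (inv_pos.mpr hc)]
    calc c⁻¹ * dist y (c • η) < c⁻¹ * (c * ε) :=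
          mul_lt_mul_of_pos_left hd (inv_pos.mpr hc)
      _ = ε := by field_simp
  have hmem : c⁻¹ • y ∈ X := hball _ (Submodule.smul_mem _ _ hy) h1
  have := hX hmem hηX (u := c) (v := 0) hc.le le_rfl
  simpa [smul_inv_smul₀ hc.ne'] using this

theorem stmt_2 (X : Set (Fin n → ℝ)) (hX : IsConvexCone X)
    (η γ : Fin n → ℝ) (hη : η ∈ relInt X) (hγ : γ ∈ closure X \ relInt X) :
    ∀ t : ℝ, 0 < t → openSegment ℝ (t • γ - η) γ ∩ closure X = ∅ := by
  intro t ht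
  rw [Set.eq_empty_iff_forall_notMem]
  rintro z ⟨hzseg, hzcl⟩
  obtain ⟨a, b, ha, hb, hab, hz⟩ := hzseg
  set c : ℝ := a * t + b with hc
  have hcpos : 0 < c := by positivity
  have hγ_eq : γ = c⁻¹ • (a • η + z) := by
    have h : a • η + z = c • γ := by
      rw [← hz, hc]
      module
    rw [h, inv_smul_smul₀ hcpos.ne']
  have h1 : a • η ∈ relInt X := relInt_smul hX hη ha
  have h2 : a • η + z ∈ relInt X := relInt_add_closure hX h1 hzcl
  have h3 : c⁻¹ • (a • η + z) ∈ relInt X := relInt_smul hX h2 (inv_pos.mpr hcpos)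
  exact hγ.2 (hγ_eq ▸ h3)
end

section
/- Let Λ be a finite-dimensional algebra and θ ∈ K₀(proj Λ)_ℝ. The θ-semistable subcategory W_θ = T̄_θ ∩ F̄_θ, where T̄_θ = {M : ⟨θ,[M']⟩ ≥ 0 for all quotients M' of M} and F̄_θ = {M : ⟨θ,[M']⟩ ≤ 0 for all submodules M' of M}, is a wide subcategory of mod Λ: it is closed under kernels, cokernels, and extensions. -/
open Module

variable (k Λ : Type) [Field k] [Ring Λ] [Algebra k Λ]

/-- Left multiplication by an algebra element, as a `k`-linear endomorphism of a module. -/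
noncomputable def mulMap (a : Λ) (M : Type) [AddCommGroup M] [Module k M] [Module Λ M]
    [IsScalarTower k Λ M] : M →ₗ[k] M where
  toFun m := a • m
  map_add' := smul_add a
  map_smul' c m := by
    simp only [RingHom.id_apply]
    rw [← algebraMap_smul Λ c m, smul_smul, ← Algebra.commutes, ← smul_smul,
      algebraMap_smul]

/-- The Euler pairing `⟨θ, [M]⟩` of `θ ∈ K₀(proj Λ)_ℝ` (written in the basis of the
indecomposable projectives `P_i = Λ e_i`) with a module `M`, using
`dim_k Hom(Λ e_i, M) = dim_k (e_i • M)`. -/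
noncomputable def euler {n : ℕ} (e : Fin n → Λ) (θ : Fin n → ℝ)
    (M : Type) [AddCommGroup M] [Module k M] [Module Λ M] [IsScalarTower k Λ M] : ℝ :=
  ∑ i, θ i * (Module.finrank k (LinearMap.range (mulMap k Λ (e i) M)) : ℝ)

/-- `M ∈ T̄_θ` : every quotient of `M` pairs nonnegatively with `θ`. -/
def TbarMem {n : ℕ} (e : Fin n → Λ) (θ : Fin n → ℝ) (M : Type) [AddCommGroup M]
    [Module k M] [Module Λ M] [IsScalarTower k Λ M] : Prop :=
  ∀ N : Submodule Λ M, 0 ≤ euler k Λ e θ (M ⧸ N)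

/-- `M ∈ F̄_θ` : every submodule of `M` pairs nonpositively with `θ`. -/
def FbarMem {n : ℕ} (e : Fin n → Λ) (θ : Fin n → ℝ) (M : Type) [AddCommGroup M]
    [Module k M] [Module Λ M] [IsScalarTower k Λ M] : Prop :=
  ∀ N : Submodule Λ M, euler k Λ e θ (↥N) ≤ 0

/-- `M ∈ F_θ` : every nonzero submodule of `M` pairs strictly negatively with `θ`. -/
def FMem {n : ℕ} (e : Fin n → Λ) (θ : Fin n → ℝ) (M : Type) [AddCommGroup M]
    [Module k M] [Module Λ M] [IsScalarTower k Λ M] : Prop :=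
  ∀ N : Submodule Λ M, N ≠ ⊥ → euler k Λ e θ (↥N) < 0

/-- `M ∈ W_θ = T̄_θ ∩ F̄_θ` : the `θ`-semistable modules. -/
def WMem {n : ℕ} (e : Fin n → Λ) (θ : Fin n → ℝ) (M : Type) [AddCommGroup M]
    [Module k M] [Module Λ M] [IsScalarTower k Λ M] : Prop :=
  TbarMem k Λ e θ M ∧ FbarMem k Λ e θ M

section Helpers

variable {k Λ}

/-- A `Λ`-submodule of a finite-dimensional module is finite dimensional over `k`. -/
instance submoduleFinite (M : Type) [AddCommGroup M] [Module k M] [Module Λ M]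
    [IsScalarTower k Λ M] [Module.Finite k M] (N : Submodule Λ M) : Module.Finite k ↥N :=
  inferInstanceAs (Module.Finite k ↥(N.restrictScalars k))

/-- A quotient of a finite-dimensional module by a `Λ`-submodule is finite dimensional. -/
instance quotientFinite (M : Type) [AddCommGroup M] [Module k M] [Module Λ M]
    [IsScalarTower k Λ M] [Module.Finite k M] (N : Submodule Λ M) :
    Module.Finite k (M ⧸ N) :=
  Module.Finite.of_surjective (N.mkQ.restrictScalars k) (Submodule.mkQ_surjective N)

lemma mem_range_mulMap {M : Type} [AddCommGroup M] [Module k M] [Module Λ M]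
    [IsScalarTower k Λ M] {a : Λ} {x : M} :
    x ∈ LinearMap.range (mulMap k Λ a M) ↔ ∃ m : M, a • m = x := Iff.rfl

/-- The Euler pairing is invariant under `Λ`-linear isomorphism. -/
lemma euler_congr {n : ℕ} (e : Fin n → Λ) (θ : Fin n → ℝ)
    (M : Type) [AddCommGroup M] [Module k M] [Module Λ M] [IsScalarTower k Λ M]
    (N : Type) [AddCommGroup N] [Module k N] [Module Λ N] [IsScalarTower k Λ N]
    (σ : M ≃ₗ[Λ] N) : euler k Λ e θ M = euler k Λ e θ N := by
  unfold euler
  refine Finset.sum_congr rfl fun i _ => ?_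
  congr 2
  have key : LinearMap.range (mulMap k Λ (e i) N)
      = Submodule.map (σ.restrictScalars k : M →ₗ[k] N)
          (LinearMap.range (mulMap k Λ (e i) M)) := by
    ext x
    simp only [Submodule.mem_map, mem_range_mulMap]
    constructor
    · rintro ⟨m, rfl⟩
      exact ⟨e i • σ.symm m, ⟨σ.symm m, rfl⟩, by simp [map_smul]⟩
    · rintro ⟨y, ⟨m, rfl⟩, rfl⟩
      exact ⟨σ m, by simp [map_smul]⟩
  rw [key, LinearEquiv.finrank_map_eq]

/-- Rank additivity of `e_i ⬝ (-)` on a short exact sequence. -/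
lemma rank_add
    (A : Type) [AddCommGroup A] [Module k A] [Module Λ A] [IsScalarTower k Λ A]
    (B : Type) [AddCommGroup B] [Module k B] [Module Λ B] [IsScalarTower k Λ B]
    [Module.Finite k B]
    (C : Type) [AddCommGroup C] [Module k C] [Module Λ C] [IsScalarTower k Λ C]
    (a : Λ) (ha : a * a = a)
    (f : A →ₗ[Λ] B) (g : B →ₗ[Λ] C) (hf : Function.Injective f) (hg : Function.Surjective g)
    (hfg : LinearMap.range f = LinearMap.ker g) :
    finrank k (LinearMap.range (mulMap k Λ a B))
      = finrank k (LinearMap.range (mulMap k Λ a A))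
        + finrank k (LinearMap.range (mulMap k Λ a C)) := by
  set pA := LinearMap.range (mulMap k Λ a A) with hpA
  set pB := LinearMap.range (mulMap k Λ a B) with hpB
  set pC := LinearMap.range (mulMap k Λ a C) with hpC
  have idem : ∀ x : B, x ∈ pB → a • x = x := by
    rintro x ⟨m, rfl⟩
    show a • a • m = a • m
    rw [smul_smul, ha]
  let fk : A →ₗ[k] B := f.restrictScalars k
  let gk : B →ₗ[k] C := g.restrictScalars k
  let g' : ↥pB →ₗ[k] C := gk.comp pB.subtype
  have hrange : LinearMap.range g' = pC := by
    ext c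
    constructor
    · rintro ⟨⟨x, m, rfl⟩, rfl⟩
      exact ⟨g m, (map_smul g a m).symm⟩
    · rintro ⟨m, rfl⟩
      obtain ⟨b, rfl⟩ := hg m
      exact ⟨⟨a • b, b, rfl⟩, (map_smul g a b : g (a • b) = _)⟩
  have hker : Submodule.map pB.subtype (LinearMap.ker g') = Submodule.map fk pA := by
    have h1 : LinearMap.ker g' = Submodule.comap pB.subtype (LinearMap.ker gk) :=
      LinearMap.ker_comp _ _
    rw [h1, Submodule.map_comap_subtype]
    ext x
    simp only [Submodule.mem_inf, Submodule.mem_map, LinearMap.mem_ker]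
    constructor
    · rintro ⟨hxB, hxg⟩
      have hxf : x ∈ LinearMap.range f := by rw [hfg]; exact hxg
      obtain ⟨y, rfl⟩ := hxf
      refine ⟨a • y, ⟨y, rfl⟩, ?_⟩
      show f (a • y) = f y
      rw [map_smul]
      exact idem _ hxB
    · rintro ⟨y, ⟨m, rfl⟩, rfl⟩
      refine ⟨⟨f m, (map_smul f a m).symm⟩, ?_⟩
      show g (f (a • m)) = 0
      have : f (a • m) ∈ LinearMap.ker g := hfg ▸ LinearMap.mem_range_self f _
      exact this
  have e1 : finrank k ↥(LinearMap.ker g') = finrank k ↥pA := by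
    rw [LinearEquiv.finrank_eq (Submodule.equivSubtypeMap pB (LinearMap.ker g')), hker]
    exact (LinearEquiv.finrank_eq (Submodule.equivMapOfInjective fk hf pA)).symm
  have e2 : finrank k ↥(LinearMap.range g') = finrank k ↥pC := by rw [hrange]
  have rn := LinearMap.finrank_range_add_finrank_ker g'
  omega

/-- Additivity of the Euler pairing on short exact sequences. -/
lemma euler_add {n : ℕ} (e : Fin n → Λ) (hidem : ∀ i, e i * e i = e i) (θ : Fin n → ℝ)
    (A : Type) [AddCommGroup A] [Module k A] [Module Λ A] [IsScalarTower k Λ A]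
    (B : Type) [AddCommGroup B] [Module k B] [Module Λ B] [IsScalarTower k Λ B]
    [Module.Finite k B]
    (C : Type) [AddCommGroup C] [Module k C] [Module Λ C] [IsScalarTower k Λ C]
    (f : A →ₗ[Λ] B) (g : B →ₗ[Λ] C) (hf : Function.Injective f) (hg : Function.Surjective g)
    (hfg : LinearMap.range f = LinearMap.ker g) :
    euler k Λ e θ B = euler k Λ e θ A + euler k Λ e θ C := by
  unfold euler
  rw [← Finset.sum_add_distrib]
  refine Finset.sum_congr rfl fun i _ => ?_
  rw [rank_add A B C (e i) (hidem i) f g hf hg hfg]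
  push_cast
  ring

/-- The Euler pairing of a module is the sum of the pairings of a submodule and the
corresponding quotient. -/
lemma euler_sub {n : ℕ} (e : Fin n → Λ) (hidem : ∀ i, e i * e i = e i) (θ : Fin n → ℝ)
    (M : Type) [AddCommGroup M] [Module k M] [Module Λ M] [IsScalarTower k Λ M]
    [Module.Finite k M] (N : Submodule Λ M) :
    euler k Λ e θ M = euler k Λ e θ ↥N + euler k Λ e θ (M ⧸ N) :=
  euler_add e hidem θ ↥N M (M ⧸ N) N.subtype N.mkQ N.injective_subtype
    (Submodule.mkQ_surjective N)
    (by rw [Submodule.range_subtype, Submodule.ker_mkQ])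

/-- Euler pairing along a `Λ`-linear map: source = kernel + image. -/
lemma euler_range_ker {n : ℕ} (e : Fin n → Λ) (hidem : ∀ i, e i * e i = e i) (θ : Fin n → ℝ)
    (X : Type) [AddCommGroup X] [Module k X] [Module Λ X] [IsScalarTower k Λ X]
    [Module.Finite k X]
    (Y : Type) [AddCommGroup Y] [Module k Y] [Module Λ Y] [IsScalarTower k Λ Y]
    (h : X →ₗ[Λ] Y) :
    euler k Λ e θ X
      = euler k Λ e θ ↥(LinearMap.ker h) + euler k Λ e θ ↥(LinearMap.range h) := by
  rw [euler_sub e hidem θ X (LinearMap.ker h),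
    euler_congr e θ _ _ h.quotKerEquivRange]

/-- A `θ`-semistable module pairs to zero with `θ`. -/
lemma euler_eq_zero_of_wmem {n : ℕ} (e : Fin n → Λ) (θ : Fin n → ℝ)
    (M : Type) [AddCommGroup M] [Module k M] [Module Λ M] [IsScalarTower k Λ M]
    (h : WMem k Λ e θ M) : euler k Λ e θ M = 0 := by
  have h1 : euler k Λ e θ M ≤ 0 := by
    rw [euler_congr e θ M ↥(⊤ : Submodule Λ M) (Submodule.topEquiv).symm]
    exact h.2 ⊤
  have h2 : 0 ≤ euler k Λ e θ M := by
    rw [euler_congr e θ M (M ⧸ (⊥ : Submodule Λ M)) (Submodule.quotEquivOfEqBot ⊥ rfl).symm]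
    exact h.1 ⊥
  linarith

/-- A module pairing to zero all of whose submodules pair nonpositively is semistable. -/
lemma wmem_of {n : ℕ} (e : Fin n → Λ) (hidem : ∀ i, e i * e i = e i) (θ : Fin n → ℝ)
    (M : Type) [AddCommGroup M] [Module k M] [Module Λ M] [IsScalarTower k Λ M]
    [Module.Finite k M]
    (h0 : euler k Λ e θ M = 0) (hF : FbarMem k Λ e θ M) : WMem k Λ e θ M := by
  refine ⟨fun N => ?_, hF⟩
  have := euler_sub (k := k) e hidem θ M N
  have := hF N
  linarith

end Helpers

theorem stmt_9 [FiniteDimensional k Λ] {n : ℕ} (e : Fin n → Λ)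
    (hidem : ∀ i, e i * e i = e i) (horth : ∀ i j, i ≠ j → e i * e j = 0)
    (hsum : ∑ i, e i = 1) (θ : Fin n → ℝ) :
    -- closed under kernels
    (∀ (M : Type) [AddCommGroup M] [Module k M] [Module Λ M] [IsScalarTower k Λ M]
        [Module.Finite k M]
        (N : Type) [AddCommGroup N] [Module k N] [Module Λ N] [IsScalarTower k Λ N]
        [Module.Finite k N] (f : M →ₗ[Λ] N),
        WMem k Λ e θ M → WMem k Λ e θ N → WMem k Λ e θ (↥(LinearMap.ker f))) ∧
    -- closed under cokernels
    (∀ (M : Type) [AddCommGroup M] [Module k M] [Module Λ M] [IsScalarTower k Λ M]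
        [Module.Finite k M]
        (N : Type) [AddCommGroup N] [Module k N] [Module Λ N] [IsScalarTower k Λ N]
        [Module.Finite k N] (f : M →ₗ[Λ] N),
        WMem k Λ e θ M → WMem k Λ e θ N → WMem k Λ e θ (N ⧸ LinearMap.range f)) ∧
    -- closed under extensions
    (∀ (A : Type) [AddCommGroup A] [Module k A] [Module Λ A] [IsScalarTower k Λ A]
        [Module.Finite k A]
        (B : Type) [AddCommGroup B] [Module k B] [Module Λ B] [IsScalarTower k Λ B]
        [Module.Finite k B]
        (C : Type) [AddCommGroup C] [Module k C] [Module Λ C] [IsScalarTower k Λ C]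
        [Module.Finite k C]
        (f : A →ₗ[Λ] B) (g : B →ₗ[Λ] C),
        Function.Injective f → Function.Surjective g →
        LinearMap.range f = LinearMap.ker g →
        WMem k Λ e θ A → WMem k Λ e θ C → WMem k Λ e θ B) := by
  refine ⟨?_, ?_, ?_⟩
  · -- kernels
    intro M _ _ _ _ _ N _ _ _ _ _ f hM hN
    set K := LinearMap.ker f with hK
    have hM0 : euler k Λ e θ M = 0 := euler_eq_zero_of_wmem e θ M hM
    have hsub : euler k Λ e θ M = euler k Λ e θ ↥K + euler k Λ e θ (M ⧸ K) :=
      euler_sub (k := k) e hidem θ M K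
    have hq : euler k Λ e θ (M ⧸ K) = euler k Λ e θ ↥(LinearMap.range f) :=
      euler_congr e θ _ _ f.quotKerEquivRange
    have hr : euler k Λ e θ ↥(LinearMap.range f) ≤ 0 := hN.2 _
    have hKle : euler k Λ e θ ↥K ≤ 0 := hM.2 K
    have hK0 : euler k Λ e θ ↥K = 0 := by linarith
    refine wmem_of e hidem θ _ hK0 (fun N' => ?_)
    rw [euler_congr e θ _ _ (K.equivSubtypeMap N')]
    exact hM.2 _
  · -- cokernels
    intro M _ _ _ _ _ N _ _ _ _ _ f hM hN
    set R := LinearMap.range f with hR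
    have hM0 : euler k Λ e θ M = 0 := euler_eq_zero_of_wmem e θ M hM
    have hN0 : euler k Λ e θ N = 0 := euler_eq_zero_of_wmem e θ N hN
    have hsubM : euler k Λ e θ M
        = euler k Λ e θ ↥(LinearMap.ker f) + euler k Λ e θ (M ⧸ LinearMap.ker f) :=
      euler_sub (k := k) e hidem θ M (LinearMap.ker f)
    have hq : euler k Λ e θ (M ⧸ LinearMap.ker f) = euler k Λ e θ ↥R :=
      euler_congr e θ _ _ f.quotKerEquivRange
    have hkle : euler k Λ e θ ↥(LinearMap.ker f) ≤ 0 := hM.2 _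
    have hRle : euler k Λ e θ ↥R ≤ 0 := hN.2 R
    have hR0 : euler k Λ e θ ↥R = 0 := by linarith
    have hsubN : euler k Λ e θ N = euler k Λ e θ ↥R + euler k Λ e θ (N ⧸ R) :=
      euler_sub (k := k) e hidem θ N R
    have hQ0 : euler k Λ e θ (N ⧸ R) = 0 := by linarith
    refine wmem_of e hidem θ _ hQ0 (fun N' => ?_)
    set P := Submodule.comap R.mkQ N' with hP
    have hRP : R ≤ P := by
      intro x hx
      show R.mkQ x ∈ N'
      have : R.mkQ x = 0 := by
        rw [Submodule.mkQ_apply, Submodule.Quotient.mk_eq_zero]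
        exact hx
      rw [this]; exact N'.zero_mem
    set h : ↥P →ₗ[Λ] N ⧸ R := R.mkQ.comp P.subtype with hh
    have hrange : LinearMap.range h = N' := by
      rw [hh, LinearMap.range_comp, Submodule.range_subtype, hP]
      exact Submodule.map_comap_eq_of_surjective (Submodule.mkQ_surjective R) N'
    have hkerh : LinearMap.ker h = Submodule.comap P.subtype R := by
      rw [hh, LinearMap.ker_comp, Submodule.ker_mkQ]
    have hrk : euler k Λ e θ ↥P
        = euler k Λ e θ ↥(LinearMap.ker h) + euler k Λ e θ ↥(LinearMap.range h) :=
      euler_range_ker (k := k) e hidem θ _ _ h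
    have hker0 : euler k Λ e θ ↥(LinearMap.ker h) = 0 := by
      rw [euler_congr e θ _ _ (P.equivSubtypeMap (LinearMap.ker h)), hkerh,
        Submodule.map_comap_subtype, inf_eq_right.2 hRP]
      exact hR0
    have hPle : euler k Λ e θ ↥P ≤ 0 := hN.2 P
    rw [hrange] at hrk
    linarith
  · -- extensions
    intro A _ _ _ _ _ B _ _ _ _ _ C _ _ _ _ _ f g hf hg hfg hA hC
    have hA0 : euler k Λ e θ A = 0 := euler_eq_zero_of_wmem e θ A hA
    have hC0 : euler k Λ e θ C = 0 := euler_eq_zero_of_wmem e θ C hC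
    have hB0 : euler k Λ e θ B = 0 := by
      rw [euler_add (k := k) e hidem θ A B C f g hf hg hfg]; linarith
    refine wmem_of e hidem θ _ hB0 (fun B' => ?_)
    set h : ↥B' →ₗ[Λ] C := g.comp B'.subtype with hh
    have hrk : euler k Λ e θ ↥B'
        = euler k Λ e θ ↥(LinearMap.ker h) + euler k Λ e θ ↥(LinearMap.range h) :=
      euler_range_ker (k := k) e hidem θ _ _ h
    have hrle : euler k Λ e θ ↥(LinearMap.range h) ≤ 0 := hC.2 _
    have hkerh : Submodule.map B'.subtype (LinearMap.ker h) = B' ⊓ LinearMap.range f := by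
      rw [hh, LinearMap.ker_comp, Submodule.map_comap_subtype, hfg]
    set A' := Submodule.comap f (B' ⊓ LinearMap.range f) with hA'
    have hmapA' : Submodule.map f A' = B' ⊓ LinearMap.range f := by
      rw [hA', Submodule.map_comap_eq, inf_eq_right.2 inf_le_right]
    have hker_le : euler k Λ e θ ↥(LinearMap.ker h) ≤ 0 := by
      rw [euler_congr e θ _ _ (B'.equivSubtypeMap (LinearMap.ker h)), hkerh, ← hmapA',
        ← euler_congr e θ _ _ (Submodule.equivMapOfInjective f hf A')]
      exact hA.2 A'
    linarith
end

section
/- Let Λ be a finite-dimensional algebra and let θ, η ∈ K₀(proj Λ)_ℝ be TF-equivalent (i.e. T̄_θ = T̄_η and F̄_θ = F̄_η). Then for every module M ∈ T̄_θ there exists t ∈ ℕ with M ∈ T̄_{tθ − η}, where T̄_γ = {M : ⟨γ,[M']⟩ ≥ 0 for all quotients M' of M}. -/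
open Module

variable (k Λ : Type) [Field k] [Ring Λ] [Algebra k Λ]

section Aux

variable {X Y : Type} [AddCommGroup X] [Module k X] [Module Λ X] [IsScalarTower k Λ X]
  [AddCommGroup Y] [Module k Y] [Module Λ Y] [IsScalarTower k Λ Y]

lemma mulMap_apply (a : Λ) (m : X) : mulMap k Λ a X m = a • m := rfl

lemma mulMap_comp (a : Λ) (g : X →ₗ[Λ] Y) :
    (g.restrictScalars k) ∘ₗ mulMap k Λ a X = mulMap k Λ a Y ∘ₗ (g.restrictScalars k) := by
  ext x
  simp [mulMap_apply, map_smul]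

lemma range_map (a : Λ) (g : X →ₗ[Λ] Y) (hg : Function.Surjective g) :
    (LinearMap.range (mulMap k Λ a X)).map (g.restrictScalars k)
      = LinearMap.range (mulMap k Λ a Y) := by
  have h1 : LinearMap.range (g.restrictScalars k) = ⊤ := LinearMap.range_eq_top.mpr hg
  rw [← LinearMap.range_comp, mulMap_comp k Λ, LinearMap.range_comp, h1, Submodule.map_top]

lemma finrank_range_iso (a : Λ) (f : X ≃ₗ[Λ] Y) :
    Module.finrank k (LinearMap.range (mulMap k Λ a X))
      = Module.finrank k (LinearMap.range (mulMap k Λ a Y)) := by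
  rw [← range_map k Λ a f.toLinearMap f.surjective]
  exact (LinearEquiv.finrank_map_eq (f.restrictScalars k) _).symm

lemma euler_iso {n : ℕ} (e : Fin n → Λ) (θ : Fin n → ℝ) (f : X ≃ₗ[Λ] Y) :
    euler k Λ e θ X = euler k Λ e θ Y := by
  unfold euler
  exact Finset.sum_congr rfl fun i _ => by rw [finrank_range_iso k Λ (e i) f]

lemma range_subtype_map (a : Λ) (ha : a * a = a) (N : Submodule Λ X) :
    (LinearMap.range (mulMap k Λ a ↥N)).map ((N.subtype).restrictScalars k)
      = LinearMap.range (mulMap k Λ a X) ⊓ N.restrictScalars k := by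
  ext y
  simp only [Submodule.mem_map, LinearMap.mem_range, Submodule.mem_inf,
    Submodule.restrictScalars_mem, LinearMap.coe_restrictScalars, Submodule.coe_subtype]
  constructor
  · rintro ⟨z, ⟨x, rfl⟩, rfl⟩
    exact ⟨⟨(x : X), rfl⟩, ((mulMap k Λ a ↥N) x).2⟩
  · rintro ⟨⟨x, rfl⟩, hyN⟩
    refine ⟨(mulMap k Λ a ↥N) ⟨a • x, hyN⟩, ⟨_, rfl⟩, ?_⟩
    show a • (a • x) = a • x
    rw [smul_smul, ha]

lemma finrank_range_add (a : Λ) (ha : a * a = a) [Module.Finite k X] (N : Submodule Λ X) :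
    Module.finrank k (LinearMap.range (mulMap k Λ a ↥N))
      + Module.finrank k (LinearMap.range (mulMap k Λ a (X ⧸ N)))
      = Module.finrank k (LinearMap.range (mulMap k Λ a X)) := by
  set p : Submodule k X := LinearMap.range (mulMap k Λ a X) with hp
  set φ : ↥p →ₗ[k] X ⧸ N := ((N.mkQ).restrictScalars k).comp p.subtype with hφ
  have h1 : LinearMap.range φ = LinearMap.range (mulMap k Λ a (X ⧸ N)) := by
    rw [hφ, LinearMap.range_comp, Submodule.range_subtype]
    exact range_map k Λ a N.mkQ N.mkQ_surjective
  have hker : LinearMap.ker φ = Submodule.comap p.subtype (p ⊓ N.restrictScalars k) := by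
    rw [hφ, LinearMap.ker_comp, LinearMap.ker_restrictScalars, Submodule.ker_mkQ,
      Submodule.comap_inf, Submodule.comap_subtype_self, top_inf_eq]
  have h2 : Module.finrank k (LinearMap.ker φ)
      = Module.finrank k ↥(p ⊓ N.restrictScalars k) := by
    rw [hker]
    exact (Submodule.comapSubtypeEquivOfLe inf_le_left).finrank_eq
  have h3 : Module.finrank k (LinearMap.range (mulMap k Λ a ↥N))
      = Module.finrank k ↥(p ⊓ N.restrictScalars k) := by
    rw [← range_subtype_map k Λ a ha N]
    exact (Submodule.equivMapOfInjective ((N.subtype).restrictScalars k)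
      (fun x y h => Subtype.val_injective h) _).finrank_eq
  have h4 := LinearMap.finrank_range_add_finrank_ker φ
  rw [h1, h2] at h4
  have h5 : Module.finrank k ↥p = Module.finrank k (LinearMap.range (mulMap k Λ a X)) := rfl
  omega

lemma euler_add_s10 {n : ℕ} (e : Fin n → Λ) (hidem : ∀ i, e i * e i = e i) (θ : Fin n → ℝ)
    [Module.Finite k X] (N : Submodule Λ X) :
    euler k Λ e θ ↥N + euler k Λ e θ (X ⧸ N) = euler k Λ e θ X := by
  unfold euler
  rw [← Finset.sum_add_distrib]
  refine Finset.sum_congr rfl fun i _ => ?_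
  rw [← mul_add, ← Nat.cast_add, finrank_range_add k Λ (e i) (hidem i) N]

end Aux

theorem stmt_10 [FiniteDimensional k Λ] {n : ℕ} (e : Fin n → Λ)
    (hidem : ∀ i, e i * e i = e i) (horth : ∀ i j, i ≠ j → e i * e j = 0)
    (hsum : ∑ i, e i = 1) (θ η : Fin n → ℝ)
    -- TF-equivalence of θ and η
    (hT : ∀ (M : Type) [AddCommGroup M] [Module k M] [Module Λ M] [IsScalarTower k Λ M]
        [Module.Finite k M], TbarMem k Λ e θ M ↔ TbarMem k Λ e η M)
    (hF : ∀ (M : Type) [AddCommGroup M] [Module k M] [Module Λ M] [IsScalarTower k Λ M]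
        [Module.Finite k M], FbarMem k Λ e θ M ↔ FbarMem k Λ e η M) :
    ∀ (M : Type) [AddCommGroup M] [Module k M] [Module Λ M] [IsScalarTower k Λ M]
        [Module.Finite k M],
      TbarMem k Λ e θ M → ∃ t : ℕ, 0 < t ∧ TbarMem k Λ e ((t : ℝ) • θ - η) M := by
  intro M _ _ _ _ _ hM
  classical
  have hMη : TbarMem k Λ e η M := (hT M).mp hM
  have hfin : ∀ N0 : Submodule Λ M, Module.Finite k (M ⧸ N0) := fun N0 =>
    Module.Finite.of_surjective ((N0.mkQ).restrictScalars k) N0.mkQ_surjective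
  -- key vanishing fact
  have key : ∀ N0 : Submodule Λ M,
      euler k Λ e θ (M ⧸ N0) = 0 → euler k Λ e η (M ⧸ N0) ≤ 0 := by
    intro N0 h0
    haveI := hfin N0
    have hTQ : TbarMem k Λ e θ (M ⧸ N0) := by
      intro P
      have hsurj : Function.Surjective (P.mkQ ∘ₗ N0.mkQ) :=
        P.mkQ_surjective.comp N0.mkQ_surjective
      have hiso := LinearMap.quotKerEquivOfSurjective _ hsurj
      rw [← euler_iso k Λ e θ hiso]
      exact hM _
    have hFQ : FbarMem k Λ e θ (M ⧸ N0) := by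
      intro P
      have hadd := euler_add_s10 k Λ e hidem θ P
      have h1 := hTQ P
      linarith
    have hFη : FbarMem k Λ e η (M ⧸ N0) := (hF _).mp hFQ
    have htop := hFη ⊤
    have := euler_iso k Λ e η (Submodule.topEquiv : (⊤ : Submodule Λ (M ⧸ N0)) ≃ₗ[Λ] (M ⧸ N0))
    linarith
  set D := Module.finrank k M with hD
  set F : (Fin n → Fin (D + 1)) → ℕ :=
    fun d => ⌈(∑ i, η i * ((d i : ℕ) : ℝ)) / (∑ i, θ i * ((d i : ℕ) : ℝ))⌉₊ with hFdef
  refine ⟨Finset.univ.sup F + 1, Nat.succ_pos _, ?_⟩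
  intro N0
  haveI := hfin N0
  have hb : ∀ i, Module.finrank k (LinearMap.range (mulMap k Λ (e i) (M ⧸ N0))) < D + 1 := by
    intro i
    have h1 : Module.finrank k (LinearMap.range (mulMap k Λ (e i) (M ⧸ N0)))
        ≤ Module.finrank k (M ⧸ N0) := Submodule.finrank_le _
    have h2 : Module.finrank k (M ⧸ N0) ≤ D := by
      have h3 := LinearMap.finrank_range_le ((N0.mkQ).restrictScalars k)
      have h4 : LinearMap.range ((N0.mkQ).restrictScalars k) = ⊤ :=
        LinearMap.range_eq_top.mpr N0.mkQ_surjective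
      rwa [h4, finrank_top] at h3
    omega
  set d : Fin n → Fin (D + 1) :=
    fun i => ⟨Module.finrank k (LinearMap.range (mulMap k Λ (e i) (M ⧸ N0))), hb i⟩ with hd
  have hθd : euler k Λ e θ (M ⧸ N0) = ∑ i, θ i * ((d i : ℕ) : ℝ) := rfl
  have hηd : euler k Λ e η (M ⧸ N0) = ∑ i, η i * ((d i : ℕ) : ℝ) := rfl
  have hexp : euler k Λ e (((Finset.univ.sup F + 1 : ℕ) : ℝ) • θ - η) (M ⧸ N0)
      = ((Finset.univ.sup F + 1 : ℕ) : ℝ) * euler k Λ e θ (M ⧸ N0)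
        - euler k Λ e η (M ⧸ N0) := by
    simp only [euler, Pi.sub_apply, Pi.smul_apply, smul_eq_mul, sub_mul, mul_assoc,
      Finset.sum_sub_distrib, Finset.mul_sum]
  rw [hexp]
  have hθ0 : 0 ≤ euler k Λ e θ (M ⧸ N0) := hM N0
  rcases eq_or_lt_of_le hθ0 with h | h
  · have hηle := key N0 h.symm
    rw [← h, mul_zero]
    linarith
  · have hle : (∑ i, η i * ((d i : ℕ) : ℝ)) / (∑ i, θ i * ((d i : ℕ) : ℝ))
        ≤ ((Finset.univ.sup F : ℕ) : ℝ) :=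
      le_trans (Nat.le_ceil _) (Nat.cast_le.mpr (Finset.le_sup (f := F) (Finset.mem_univ d)))
    have hθpos : (0 : ℝ) < ∑ i, θ i * ((d i : ℕ) : ℝ) := by rw [← hθd]; exact h
    rw [div_le_iff₀ hθpos] at hle
    have hc : ((Finset.univ.sup F + 1 : ℕ) : ℝ) = ((Finset.univ.sup F : ℕ) : ℝ) + 1 := by
      push_cast; ring
    rw [hθd, hηd, hc]
    nlinarith
end
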